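/- arXiv:2402.17075 — 3 statements merged into one kernel-verified Lean document; each statement's English description precedes it below -/
import Mathlib

section
/- Let λ < 1/4, β^± = -1/2 ± √(1-4λ)/2, and let δ > 0 satisfy δ < β⁺ - γ and δ < γ - β⁻ for some γ ∈ (β⁻, β⁺). Suppose g : [R₁, ∞) → ℝ is continuous with |g(s)| ≤ M e^{γ s}, and for R₁ ≤ R₂ define w(s) := -e^{β⁻ s} ∫_{R₁}^{R₂} e^{(β⁺-β⁻)r} ∫_r^∞ e^{-β⁺ t} g(t) dt dr for s ≥ R₂. Then |w(s)| ≤ C (R₂ - R₁) M e^{γ s} for all s ≥ R₂, with C depending only on γ - β⁻ and β⁺ - γ. -/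
open MeasureTheory Real

lemma exp_neg_integral_Ioi (r : ℝ) {b : ℝ} (hb : 0 < b) :
    ∫ x in Set.Ioi r, Real.exp (-b * x) = Real.exp (-b * r) / b := by
  have := MeasureTheory.integral_comp_mul_left_Ioi (fun x => Real.exp (-x)) r hb
  simp only [← neg_mul, smul_eq_mul] at this
  rw [this, integral_exp_neg_Ioi]
  ring

theorem stmt7 (lam βm βp γ δ : ℝ) (hlam : lam < 1/4)
    (hβm : βm = -(1/2) - Real.sqrt (1 - 4*lam)/2)
    (hβp : βp = -(1/2) + Real.sqrt (1 - 4*lam)/2)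
    (hδ : 0 < δ) (hδ1 : δ < βp - γ) (hδ2 : δ < γ - βm) :
    ∃ C > 0, ∀ (R₁ R₂ M : ℝ) (g : ℝ → ℝ), R₁ ≤ R₂ →
      ContinuousOn g (Set.Ici R₁) →
      (∀ s ≥ R₁, |g s| ≤ M * Real.exp (γ * s)) →
      ∀ w : ℝ → ℝ,
        (∀ s, w s = -Real.exp (βm * s) *
          ∫ r in R₁..R₂, Real.exp ((βp - βm) * r) * ∫ t in Set.Ici r, Real.exp (-βp * t) * g t) →
        ∀ s ≥ R₂, |w s| ≤ C * (R₂ - R₁) * M * Real.exp (γ * s) := by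
  have hbp : 0 < βp - γ := lt_trans hδ hδ1
  have hbm : 0 < γ - βm := lt_trans hδ hδ2
  refine ⟨1 / (βp - γ), by positivity, ?_⟩
  intro R₁ R₂ M g hR hgc hgb w hw s hs
  have hM : 0 ≤ M := by
    have h1 := hgb R₁ le_rfl
    have h2 : (0:ℝ) ≤ M * Real.exp (γ * R₁) := le_trans (abs_nonneg _) h1
    nlinarith [Real.exp_pos (γ * R₁)]
  -- bound the inner integral for r ∈ Ioc R₁ R₂
  have inner_bound : ∀ r ∈ Set.uIoc R₁ R₂,
      ‖Real.exp ((βp - βm) * r) * ∫ t in Set.Ici r, Real.exp (-βp * t) * g t‖ ≤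
        M * Real.exp ((γ - βm) * R₂) / (βp - γ) := by
    intro r hr
    rw [Set.uIoc_of_le hR] at hr
    have hr1 : R₁ ≤ r := le_of_lt hr.1
    have hI : |∫ t in Set.Ici r, Real.exp (-βp * t) * g t| ≤
        M * Real.exp (-(βp - γ) * r) / (βp - γ) := by
      rw [MeasureTheory.integral_Ici_eq_integral_Ioi]
      have hint : IntegrableOn (fun t => M * Real.exp (-(βp - γ) * t)) (Set.Ioi r) := by
        exact (exp_neg_integrableOn_Ioi r hbp).const_mul M
      have hae : ∀ᵐ t ∂(volume.restrict (Set.Ioi r)),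
          ‖Real.exp (-βp * t) * g t‖ ≤ M * Real.exp (-(βp - γ) * t) := by
        rw [MeasureTheory.ae_restrict_iff' measurableSet_Ioi]
        refine Filter.Eventually.of_forall fun t ht => ?_
        have ht1 : R₁ ≤ t := le_trans hr1 (le_of_lt ht)
        have := hgb t ht1
        rw [norm_mul, Real.norm_eq_abs, Real.norm_eq_abs, Real.abs_exp]
        calc Real.exp (-βp * t) * |g t| ≤ Real.exp (-βp * t) * (M * Real.exp (γ * t)) := by
              exact mul_le_mul_of_nonneg_left this (le_of_lt (Real.exp_pos _))
          _ = M * Real.exp (-(βp - γ) * t) := by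
              rw [show Real.exp (-βp * t) * (M * Real.exp (γ * t))
                  = M * (Real.exp (-βp * t) * Real.exp (γ * t)) by ring, ← Real.exp_add]
              ring_nf
      calc |∫ t in Set.Ioi r, Real.exp (-βp * t) * g t|
          ≤ ∫ t in Set.Ioi r, M * Real.exp (-(βp - γ) * t) :=
            MeasureTheory.norm_integral_le_of_norm_le hint hae
        _ = M * (Real.exp (-(βp - γ) * r) / (βp - γ)) := by
            rw [MeasureTheory.integral_const_mul, exp_neg_integral_Ioi r hbp]
        _ = M * Real.exp (-(βp - γ) * r) / (βp - γ) := by ring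
    rw [norm_mul, Real.norm_eq_abs, Real.norm_eq_abs, Real.abs_exp]
    calc Real.exp ((βp - βm) * r) * |∫ t in Set.Ici r, Real.exp (-βp * t) * g t|
        ≤ Real.exp ((βp - βm) * r) * (M * Real.exp (-(βp - γ) * r) / (βp - γ)) :=
          mul_le_mul_of_nonneg_left hI (le_of_lt (Real.exp_pos _))
      _ = M * Real.exp ((γ - βm) * r) / (βp - γ) := by
          rw [show Real.exp ((βp - βm) * r) * (M * Real.exp (-(βp - γ) * r) / (βp - γ))
              = Real.exp ((βp - βm) * r) * Real.exp (-(βp - γ) * r) * M / (βp - γ) by ring,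
            ← Real.exp_add, show (βp - βm) * r + -(βp - γ) * r = (γ - βm) * r by ring]
          ring
      _ ≤ M * Real.exp ((γ - βm) * R₂) / (βp - γ) := by
          have := Real.exp_le_exp.mpr (mul_le_mul_of_nonneg_left hr.2 (le_of_lt hbm))
          gcongr
  have houter := intervalIntegral.norm_integral_le_of_norm_le_const inner_bound
  rw [hw s, abs_mul, abs_neg, Real.abs_exp]
  rw [Real.norm_eq_abs] at houter
  calc Real.exp (βm * s) *
        |∫ r in R₁..R₂, Real.exp ((βp - βm) * r) * ∫ t in Set.Ici r, Real.exp (-βp * t) * g t|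
      ≤ Real.exp (βm * s) * (M * Real.exp ((γ - βm) * R₂) / (βp - γ) * |R₂ - R₁|) :=
        mul_le_mul_of_nonneg_left houter (le_of_lt (Real.exp_pos _))
    _ = 1 / (βp - γ) * (R₂ - R₁) * M * (Real.exp (βm * s) * Real.exp ((γ - βm) * R₂)) := by
        rw [abs_of_nonneg (by linarith : (0:ℝ) ≤ R₂ - R₁)]; ring
    _ ≤ 1 / (βp - γ) * (R₂ - R₁) * M * Real.exp (γ * s) := by
        apply mul_le_mul_of_nonneg_left _
          (mul_nonneg (mul_nonneg (by positivity) (by linarith)) hM)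
        rw [← Real.exp_add]
        apply Real.exp_le_exp.mpr
        nlinarith
end

section
/- Let σ ∈ (0,1), let h : S¹ → (0,∞) be continuous, and for i = 1,2 let S_i : [l₀,∞) × S¹ → ℝ be functions, concave and strictly increasing in l for each fixed θ, satisfying S_i(l,θ) = σ⁻¹ l^σ h(θ) + o(l^σ) uniformly in θ as l → ∞. Then ∂_l S_i(l,θ) = l^{σ-1} h(θ) + o(l^{σ-1}) uniformly in θ as l → ∞, and consequently for each fixed δ > 0, S_1(l-δ, θ) - S_1(l,θ) = -δ l^{σ-1} h(θ) + o(l^{σ-1}) uniformly in θ as l → ∞. -/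
set_option maxHeartbeats 1000000

open Set

private lemma key15_bern_u {σ η : ℝ} (hσ0 : 0 < σ) (hσ1 : σ < 1) (hη0 : 0 < η) (hη2 : η ≤ 1/2) :
    1 - (1-η)^σ ≤ σ*η*(1+2*η) := by
  have h0 : (0:ℝ) < 1-η := by linarith
  have bern : (1-η:ℝ)^(1-σ) ≤ 1 - (1-σ)*η := by
    have h := rpow_one_add_le_one_add_mul_self (s := -η) (by linarith) (p := 1-σ)
      (by linarith) (by linarith)
    rw [show (1:ℝ) + -η = 1 - η by ring] at h
    linarith [h]
  set u := (1-η:ℝ)^σ with hu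
  set v := (1-η:ℝ)^(1-σ) with hv
  have huv : u * v = 1-η := by
    rw [hu, hv, ← Real.rpow_add h0, show σ + (1-σ) = (1:ℝ) by ring, Real.rpow_one]
  have hv0 : 0 < v := Real.rpow_pos_of_pos h0 _
  have hvge : 1-η ≤ v := by
    have := Real.rpow_le_rpow_of_exponent_ge h0 (by linarith) (show 1-σ ≤ (1:ℝ) by linarith)
    rwa [Real.rpow_one] at this
  have F : (1-u)*v ≤ σ*η := by nlinarith [huv, bern]
  rcases le_or_gt u 1 with hu1 | hu1
  · have A : (1-u)*(1-η) ≤ (1-u)*v :=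
      mul_le_mul_of_nonneg_left hvge (by linarith : (0:ℝ) ≤ 1-u)
    have B : 1-u ≤ σ*η/(1-η) := by rw [le_div_iff₀ h0]; linarith
    have C : σ*η/(1-η) ≤ σ*η*(1+2*η) := by
      rw [div_le_iff₀ h0]
      nlinarith [mul_nonneg (mul_nonneg hσ0.le (mul_pos hη0 hη0).le)
        (by linarith : (0:ℝ) ≤ 1-2*η)]
    linarith
  · nlinarith [mul_pos hσ0 hη0]

private lemma key15_bern_l {σ η : ℝ} (hσ0 : 0 < σ) (hσ1 : σ < 1) (hη0 : 0 < η) (hη2 : η ≤ 1/2) :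
    σ*η*(1-η) ≤ (1+η)^σ - 1 := by
  have bern : (1+η:ℝ)^(1-σ) ≤ 1 + (1-σ)*η :=
    rpow_one_add_le_one_add_mul_self (by linarith) (by linarith) (by linarith)
  set u := (1+η:ℝ)^σ with hu
  set v := (1+η:ℝ)^(1-σ) with hv
  have h0 : (0:ℝ) < 1+η := by linarith
  have huv : u * v = 1+η := by
    rw [hu, hv, ← Real.rpow_add h0, show σ + (1-σ) = (1:ℝ) by ring, Real.rpow_one]
  have hv0 : 0 < v := Real.rpow_pos_of_pos h0 _
  have hu1 : 1 ≤ u := by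
    have := Real.rpow_le_rpow_of_exponent_le (show (1:ℝ) ≤ 1+η by linarith) hσ0.le
    rwa [Real.rpow_zero] at this
  have G : σ*η ≤ (u-1)*v := by nlinarith [huv, bern]
  have hvle : v ≤ 1+η := by nlinarith [bern]
  have A : (u-1)*v ≤ (u-1)*(1+η) :=
    mul_le_mul_of_nonneg_left hvle (by linarith : (0:ℝ) ≤ u-1)
  have B : σ*η/(1+η) ≤ u-1 := by rw [div_le_iff₀ h0]; linarith
  have C : σ*η*(1-η) ≤ σ*η/(1+η) := by
    rw [le_div_iff₀ h0]
    nlinarith [mul_nonneg (mul_nonneg hσ0.le hη0.le) (mul_pos hη0 hη0).le]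
  linarith

private lemma key15 (σ : ℝ) (hσ0 : 0 < σ) (hσ1 : σ < 1) (h : ℝ → ℝ) (M : ℝ) (hM1 : 1 ≤ M)
    (hh0 : ∀ θ, 0 ≤ h θ) (hhM : ∀ θ, h θ ≤ M) (l₀ : ℝ) (hl₀ : 0 < l₀) (S : ℝ → ℝ → ℝ)
    (hconc : ∀ θ, ConcaveOn ℝ (Set.Ici l₀) (fun l => S l θ))
    (hdiff : ∀ θ : ℝ, ∀ l ≥ l₀, DifferentiableAt ℝ (fun t => S t θ) l)
    (hasym : ∀ ε > 0, ∃ L ≥ l₀, ∀ l ≥ L, ∀ θ : ℝ, |S l θ - σ⁻¹ * l ^ σ * h θ| ≤ ε * l ^ σ) :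
    ∀ ε > 0, ∃ L ≥ l₀, ∀ l ≥ L, ∀ θ : ℝ,
      |deriv (fun t => S t θ) l - l ^ (σ-1) * h θ| ≤ ε * l ^ (σ-1) := by
  intro ε hε
  have hM0 : (0:ℝ) < M := lt_of_lt_of_le one_pos hM1
  set η : ℝ := min (ε/(4*M)) (1/2) with hηdef
  have hη0 : 0 < η := lt_min (by positivity) (by norm_num)
  have hη2 : η ≤ 1/2 := min_le_right _ _
  have hηM : η * M ≤ ε/4 := by
    have h1 : η ≤ ε/(4*M) := min_le_left _ _
    calc η * M ≤ (ε/(4*M)) * M := by nlinarith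
    _ = ε/4 := by field_simp
  obtain ⟨L₁, hL₁l₀, hA⟩ := hasym (η*ε/6) (by positivity)
  have hL₁0 : 0 < L₁ := lt_of_lt_of_le hl₀ hL₁l₀
  refine ⟨max (2*L₁) (2*l₀), le_trans (by linarith) (le_max_right _ _), ?_⟩
  intro l hl θ
  have hl2L₁ : 2*L₁ ≤ l := le_trans (le_max_left _ _) hl
  have hl2l₀ : 2*l₀ ≤ l := le_trans (le_max_right _ _) hl
  have hl0 : 0 < l := by linarith
  have hll₀ : l₀ ≤ l := by linarith
  have hlL₁ : L₁ ≤ l := by linarith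
  set f : ℝ → ℝ := fun t => S t θ with hf
  -- the points a < l < b
  set a : ℝ := (1-η)*l with ha
  set b : ℝ := (1+η)*l with hb
  have ha0 : 0 < a := by rw [ha]; nlinarith
  have haL₁ : L₁ ≤ a := by rw [ha]; nlinarith
  have hal₀ : l₀ ≤ a := by rw [ha]; nlinarith
  have hal : a < l := by rw [ha]; nlinarith
  have hlb : l < b := by rw [hb]; nlinarith
  have hbL₁ : L₁ ≤ b := by rw [hb]; nlinarith
  have hbl₀ : l₀ ≤ b := by rw [hb]; nlinarith
  have hb0 : 0 < b := by linarith
  -- rpow facts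
  have hK0 : 0 < l ^ (σ-1) := Real.rpow_pos_of_pos hl0 _
  have hlσ : l ^ σ = l ^ (σ-1) * l := by
    have h1 := Real.rpow_add hl0 (σ-1) 1
    rw [Real.rpow_one, show σ-1+1 = σ by ring] at h1
    exact h1
  set K : ℝ := l ^ (σ-1) with hK
  have hP0 : 0 < l ^ σ := Real.rpow_pos_of_pos hl0 _
  have haσ : a ^ σ = (1-η)^σ * l ^ σ := Real.mul_rpow (by linarith) hl0.le
  have hbσ : b ^ σ = (1+η)^σ * l ^ σ := Real.mul_rpow (by linarith) hl0.le
  have haσle : a ^ σ ≤ l ^ σ := Real.rpow_le_rpow ha0.le hal.le hσ0.le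
  have hbσle : b ^ σ ≤ 2 * l ^ σ := by
    have h1 : (1+η:ℝ)^σ ≤ (1+η)^(1:ℝ) :=
      Real.rpow_le_rpow_of_exponent_le (by linarith) (by linarith)
    rw [Real.rpow_one] at h1
    rw [hbσ]; nlinarith
  -- asymptotics at a, l, b
  have hAa := hA a haL₁ θ
  have hAl := hA l hlL₁ θ
  have hAb := hA b hbL₁ θ
  have hσinv : σ⁻¹ * σ = 1 := inv_mul_cancel₀ hσ0.ne'
  have hσinv0 : (0:ℝ) < σ⁻¹ := by positivity
  have hhθ0 := hh0 θ
  have hhθM := hhM θ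
  -- UPPER BOUND on deriv f l
  have slope_ub : deriv f l ≤ (f l - f a) / (l - a) := by
    have h1 := (hconc θ).deriv_le_slope (mem_Ici.2 hal₀) (mem_Ici.2 hll₀) hal
      (hdiff θ l hll₀)
    rwa [slope_def_field] at h1
  have num_ub : f l - f a ≤ ((1+2*η)*(h θ)*K + (ε/3)*K) * (l - a) := by
    have e1 : S l θ - σ⁻¹ * l ^ σ * h θ ≤ (η*ε/6) * l ^ σ := (abs_le.1 hAl).2
    have e2 : -((η*ε/6) * a ^ σ) ≤ S a θ - σ⁻¹ * a ^ σ * h θ := (abs_le.1 hAa).1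
    have key := key15_bern_u hσ0 hσ1 hη0 hη2
    have hla : l - a = η * l := by rw [ha]; ring
    have step : σ⁻¹ * l ^ σ * h θ - σ⁻¹ * a ^ σ * h θ ≤ η*(1+2*η) * l ^ σ * h θ := by
      rw [haσ]
      have h2 : (1 - (1-η)^σ) * (σ⁻¹ * l ^ σ * h θ) ≤ (σ*η*(1+2*η)) * (σ⁻¹ * l ^ σ * h θ) :=
        mul_le_mul_of_nonneg_right key (by positivity)
      calc σ⁻¹ * l ^ σ * h θ - σ⁻¹ * ((1-η)^σ * l ^ σ) * h θ
          = (1 - (1-η)^σ) * (σ⁻¹ * l ^ σ * h θ) := by ring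
        _ ≤ (σ*η*(1+2*η)) * (σ⁻¹ * l ^ σ * h θ) := h2
        _ = (σ⁻¹*σ) * (η*(1+2*η) * l ^ σ * h θ) := by ring
        _ = η*(1+2*η) * l ^ σ * h θ := by rw [hσinv]; ring
    have haσ' : (η*ε/6) * a ^ σ ≤ (η*ε/6) * l ^ σ :=
      mul_le_mul_of_nonneg_left haσle (by positivity)
    have final : f l - f a ≤ η*(1+2*η) * l ^ σ * h θ + 2*(η*ε/6) * l ^ σ := by
      simp only [hf]; linarith
    calc f l - f a ≤ η*(1+2*η) * l ^ σ * h θ + 2*(η*ε/6) * l ^ σ := final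
      _ = ((1+2*η)*(h θ)*K + (ε/3)*K) * (η * l) := by rw [hlσ]; ring
      _ = ((1+2*η)*(h θ)*K + (ε/3)*K) * (l - a) := by rw [hla]
  have deriv_ub : deriv f l ≤ (1+2*η)*(h θ)*K + (ε/3)*K := by
    have hla0 : 0 < l - a := by linarith
    calc deriv f l ≤ (f l - f a) / (l - a) := slope_ub
      _ ≤ _ := by rw [div_le_iff₀ hla0]; exact num_ub
  -- LOWER BOUND on deriv f l
  have slope_lb : (f b - f l) / (b - l) ≤ deriv f l := by
    have h1 := (hconc θ).slope_le_deriv (mem_Ici.2 hll₀) (mem_Ici.2 hbl₀) hlb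
      (hdiff θ l hll₀)
    rwa [slope_def_field] at h1
  have num_lb : ((1-η)*(h θ)*K - (ε/2)*K) * (b - l) ≤ f b - f l := by
    have e1 : -((η*ε/6) * b ^ σ) ≤ S b θ - σ⁻¹ * b ^ σ * h θ := (abs_le.1 hAb).1
    have e2 : S l θ - σ⁻¹ * l ^ σ * h θ ≤ (η*ε/6) * l ^ σ := (abs_le.1 hAl).2
    have key := key15_bern_l hσ0 hσ1 hη0 hη2
    have hbl : b - l = η * l := by rw [hb]; ring
    have step : η*(1-η) * l ^ σ * h θ ≤ σ⁻¹ * b ^ σ * h θ - σ⁻¹ * l ^ σ * h θ := by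
      rw [hbσ]
      have h2 : (σ*η*(1-η)) * (σ⁻¹ * l ^ σ * h θ) ≤ ((1+η)^σ - 1) * (σ⁻¹ * l ^ σ * h θ) :=
        mul_le_mul_of_nonneg_right key (by positivity)
      calc η*(1-η) * l ^ σ * h θ = (σ⁻¹*σ) * (η*(1-η) * l ^ σ * h θ) := by rw [hσinv]; ring
        _ = (σ*η*(1-η)) * (σ⁻¹ * l ^ σ * h θ) := by ring
        _ ≤ ((1+η)^σ - 1) * (σ⁻¹ * l ^ σ * h θ) := h2
        _ = σ⁻¹ * ((1+η)^σ * l ^ σ) * h θ - σ⁻¹ * l ^ σ * h θ := by ring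
    have hbσ' : (η*ε/6) * b ^ σ ≤ (η*ε/6) * (2 * l ^ σ) :=
      mul_le_mul_of_nonneg_left hbσle (by positivity)
    have final : η*(1-η) * l ^ σ * h θ - 3*(η*ε/6) * l ^ σ ≤ f b - f l := by
      simp only [hf]; linarith
    calc ((1-η)*(h θ)*K - (ε/2)*K) * (b - l) = η*(1-η) * l ^ σ * h θ - 3*(η*ε/6) * l ^ σ := by
          rw [hbl, hlσ]; ring
      _ ≤ f b - f l := final
  have deriv_lb : (1-η)*(h θ)*K - (ε/2)*K ≤ deriv f l := by
    have hbl0 : 0 < b - l := by linarith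
    calc (1-η)*(h θ)*K - (ε/2)*K ≤ (f b - f l) / (b - l) := by
          rw [le_div_iff₀ hbl0]; exact num_lb
      _ ≤ deriv f l := slope_lb
  -- combine
  have hKh : K * h θ ≤ K * M := mul_le_mul_of_nonneg_left hhθM hK0.le
  rw [abs_le]
  constructor
  · nlinarith [mul_le_mul_of_nonneg_right hηM hK0.le]
  · nlinarith [mul_le_mul_of_nonneg_right hηM hK0.le,
      mul_le_mul_of_nonneg_left hhθM (by positivity : (0:ℝ) ≤ 2*η*K)]

private lemma stmt15_hbound (h : ℝ → ℝ) (hcont : Continuous h)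
    (hper : ∀ θ, h (θ + 2*Real.pi) = h θ) : ∃ M : ℝ, 1 ≤ M ∧ ∀ θ, h θ ≤ M := by
  have hp : Function.Periodic h (2*Real.pi) := hper
  obtain ⟨θ₀, hθ₀, hmax⟩ := isCompact_Icc.exists_isMaxOn (s := Icc 0 (2*Real.pi))
    (Set.nonempty_Icc.2 (by positivity)) hcont.continuousOn
  refine ⟨max (h θ₀) 1, le_max_right _ _, fun θ => ?_⟩
  obtain ⟨y, hy, hyeq⟩ := hp.exists_mem_Ico₀ Real.two_pi_pos θ
  calc h θ = h y := hyeq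
    _ ≤ h θ₀ := hmax (Ico_subset_Icc_self hy)
    _ ≤ _ := le_max_left _ _

theorem stmt15 (σ : ℝ) (hσ0 : 0 < σ) (hσ1 : σ < 1) (h : ℝ → ℝ) (hcont : Continuous h)
    (hpos : ∀ θ, 0 < h θ) (hper : ∀ θ, h (θ + 2*Real.pi) = h θ)
    (l₀ : ℝ) (hl₀ : 0 < l₀) (S₁ S₂ : ℝ → ℝ → ℝ)
    (hconc : ∀ θ, ConcaveOn ℝ (Set.Ici l₀) (fun l => S₁ l θ) ∧
      ConcaveOn ℝ (Set.Ici l₀) (fun l => S₂ l θ))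
    (hmono : ∀ θ, StrictMonoOn (fun l => S₁ l θ) (Set.Ici l₀) ∧
      StrictMonoOn (fun l => S₂ l θ) (Set.Ici l₀))
    (hdiff : ∀ θ : ℝ, ∀ l ≥ l₀, DifferentiableAt ℝ (fun t => S₁ t θ) l ∧
      DifferentiableAt ℝ (fun t => S₂ t θ) l)
    (hasym : ∀ ε > 0, ∃ L ≥ l₀, ∀ l ≥ L, ∀ θ : ℝ,
      |S₁ l θ - σ⁻¹ * l ^ σ * h θ| ≤ ε * l ^ σ ∧
      |S₂ l θ - σ⁻¹ * l ^ σ * h θ| ≤ ε * l ^ σ) :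
    (∀ ε > 0, ∃ L ≥ l₀, ∀ l ≥ L, ∀ θ : ℝ,
      |deriv (fun t => S₁ t θ) l - l ^ (σ-1) * h θ| ≤ ε * l ^ (σ-1) ∧
      |deriv (fun t => S₂ t θ) l - l ^ (σ-1) * h θ| ≤ ε * l ^ (σ-1)) ∧
    ∀ δ > 0, ∀ ε > 0, ∃ L ≥ l₀, ∀ l ≥ L, ∀ θ : ℝ,
      |S₁ (l - δ) θ - S₁ l θ + δ * l ^ (σ-1) * h θ| ≤ ε * l ^ (σ-1) := by
  obtain ⟨M, hM1, hhM⟩ := stmt15_hbound h hcont hper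
  have hM0 : (0:ℝ) < M := lt_of_lt_of_le one_pos hM1
  have hh0 : ∀ θ, 0 ≤ h θ := fun θ => (hpos θ).le
  have D1 := key15 σ hσ0 hσ1 h M hM1 hh0 hhM l₀ hl₀ S₁ (fun θ => (hconc θ).1)
    (fun θ l hl => (hdiff θ l hl).1)
    (fun ε hε => (hasym ε hε).imp fun L ⟨h1, h2⟩ => ⟨h1, fun l hl θ => (h2 l hl θ).1⟩)
  have D2 := key15 σ hσ0 hσ1 h M hM1 hh0 hhM l₀ hl₀ S₂ (fun θ => (hconc θ).2)
    (fun θ l hl => (hdiff θ l hl).2)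
    (fun ε hε => (hasym ε hε).imp fun L ⟨h1, h2⟩ => ⟨h1, fun l hl θ => (h2 l hl θ).2⟩)
  have part1 : ∀ ε > 0, ∃ L ≥ l₀, ∀ l ≥ L, ∀ θ : ℝ,
      |deriv (fun t => S₁ t θ) l - l ^ (σ-1) * h θ| ≤ ε * l ^ (σ-1) ∧
      |deriv (fun t => S₂ t θ) l - l ^ (σ-1) * h θ| ≤ ε * l ^ (σ-1) := by
    intro ε hε
    obtain ⟨L, hL, h1⟩ := D1 ε hε
    obtain ⟨L', hL', h2⟩ := D2 ε hε
    exact ⟨max L L', le_trans hL (le_max_left _ _), fun l hl θ =>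
      ⟨h1 l (le_trans (le_max_left _ _) hl) θ, h2 l (le_trans (le_max_right _ _) hl) θ⟩⟩
  refine ⟨part1, ?_⟩
  intro δ hδ ε hε
  have hε₁0 : (0:ℝ) < ε/(4*(δ+1)) := by positivity
  set ε₁ : ℝ := ε/(4*(δ+1)) with hε₁
  obtain ⟨L₁, hL₁l₀, hD⟩ := part1 ε₁ hε₁0
  refine ⟨max (max (L₁ + δ) (2*δ)) (4*M*δ^2/ε + l₀), ?_, ?_⟩
  · exact le_trans (le_add_of_nonneg_left (by positivity)) (le_max_right _ _)
  intro l hl θ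
  have h1 : L₁ + δ ≤ l := le_trans (le_trans (le_max_left _ _) (le_max_left _ _)) hl
  have h2 : 2*δ ≤ l := le_trans (le_trans (le_max_right _ _) (le_max_left _ _)) hl
  have h3 : 4*M*δ^2/ε + l₀ ≤ l := le_trans (le_max_right _ _) hl
  have hLserved : 4*M*δ^2/ε ≤ l := by linarith
  have h4Mδ : 4*M*δ^2 ≤ l*ε := by
    have := (div_le_iff₀ hε).1 hLserved
    linarith
  have hL₁0 : 0 < L₁ := lt_of_lt_of_le hl₀ hL₁l₀
  have hl0 : 0 < l := by linarith
  set a : ℝ := l - δ with ha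
  have haL₁ : L₁ ≤ a := by rw [ha]; linarith
  have hlL₁ : L₁ ≤ l := by linarith
  have hll₀ : l₀ ≤ l := by linarith
  have hal₀ : l₀ ≤ a := le_trans hL₁l₀ haL₁
  have ha0 : 0 < a := lt_of_lt_of_le hl₀ hal₀
  have hal : a < l := by rw [ha]; linarith
  have hl2a : l ≤ 2*a := by rw [ha]; linarith
  set f : ℝ → ℝ := fun t => S₁ t θ with hf
  set K : ℝ := l ^ (σ-1) with hK
  set Ka : ℝ := a ^ (σ-1) with hKa
  have hK0 : 0 < K := Real.rpow_pos_of_pos hl0 _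
  have hKa0 : 0 < Ka := Real.rpow_pos_of_pos ha0 _
  have hKKa : K ≤ Ka := Real.rpow_le_rpow_of_nonpos ha0 hal.le (by linarith)
  -- ratio bounds
  have hratio : Ka ≤ (l/a) * K := by
    have hu0 : 0 < a^(1-σ) := Real.rpow_pos_of_pos ha0 _
    have hv0 : 0 < l^(1-σ) := Real.rpow_pos_of_pos hl0 _
    have hid : Ka = (l/a)^(1-σ) * K := by
      rw [hKa, hK, Real.div_rpow hl0.le ha0.le,
        show σ - 1 = -(1-σ) by ring, Real.rpow_neg ha0.le, Real.rpow_neg hl0.le]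
      field_simp
    have hle : (l/a)^(1-σ) ≤ l/a := by
      have h5 : (1:ℝ) ≤ l/a := (one_le_div ha0).2 hal.le
      have := Real.rpow_le_rpow_of_exponent_le h5 (show 1-σ ≤ (1:ℝ) by linarith)
      rwa [Real.rpow_one] at this
    rw [hid]
    exact mul_le_mul_of_nonneg_right hle hK0.le
  have hla2 : l/a ≤ 2 := (div_le_iff₀ ha0).2 (by linarith)
  have hKa2 : Ka ≤ 2*K :=
    le_trans hratio (mul_le_mul_of_nonneg_right hla2 hK0.le)
  have hq : l/a - 1 ≤ 2*δ/l := by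
    rw [div_sub_one ha0.ne', div_le_div_iff₀ ha0 hl0]
    nlinarith [mul_nonneg hδ.le (by linarith : (0:ℝ) ≤ l - 2*δ)]
  have hKadiff : Ka - K ≤ (2*δ/l)*K := by
    have := mul_le_mul_of_nonneg_right hq hK0.le
    nlinarith [hratio]
  -- derivative bounds from part 1
  have dL := abs_le.1 (hD l hlL₁ θ).1
  have dA := abs_le.1 (hD a haL₁ θ).1
  -- slope comparisons
  have hmem_a : a ∈ Ici l₀ := mem_Ici.2 hal₀
  have hmem_l : l ∈ Ici l₀ := mem_Ici.2 hll₀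
  have s1 : deriv f l ≤ (f l - f a) / (l - a) := by
    have := (hconc θ).1.deriv_le_slope hmem_a hmem_l hal (hdiff θ l hll₀).1
    rwa [slope_def_field] at this
  have s2 : (f l - f a) / (l - a) ≤ deriv f a := by
    have := (hconc θ).1.slope_le_deriv hmem_a hmem_l hal (hdiff θ a hal₀).1
    rwa [slope_def_field] at this
  have hla : l - a = δ := by rw [ha]; ring
  rw [hla] at s1 s2
  have X1 : δ * deriv f l ≤ f l - f a := by
    have := (le_div_iff₀ hδ).1 s1
    linarith
  have X2 : f l - f a ≤ δ * deriv f a := by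
    have := (div_le_iff₀ hδ).1 s2
    linarith
  -- error bookkeeping
  have hhθ0 := hh0 θ
  have hhθM := hhM θ
  have hfa : f a = S₁ a θ := rfl
  have hfl : f l = S₁ l θ := rfl
  rw [← hf, ← hK] at dL
  rw [← hf, ← hKa] at dA
  clear_value f a K Ka ε₁
  clear hD part1 D1 D2 hasym hconc hmono hdiff hcont hper hpos hh0 hhM
  clear hratio hla2 hq s1 s2 hmem_a hmem_l hla h1 h3 hLserved haL₁ hlL₁ hL₁0 hL₁l₀
  have hδε₁ : δ * ε₁ ≤ ε/4 := by
    rw [hε₁, ← mul_div_assoc, div_le_div_iff₀ (by positivity) (by norm_num)]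
    nlinarith
  have e1 : δ * (K * h θ) - (f l - f a) ≤ ε * K := by
    have hKl : K * h θ - deriv f l ≤ ε₁ * K := by linarith [dL.1]
    have m1 : δ * (K * h θ - deriv f l) ≤ δ * (ε₁ * K) :=
      mul_le_mul_of_nonneg_left hKl hδ.le
    have m2 : δ * ε₁ * K ≤ (ε/4) * K := mul_le_mul_of_nonneg_right hδε₁ hK0.le
    nlinarith [X1]
  have e2 : (f l - f a) - δ * (K * h θ) ≤ ε * K := by
    have hda : deriv f a ≤ Ka * h θ + ε₁ * Ka := by linarith [dA.2]
    have h6 : (Ka - K) * h θ ≤ (2*δ/l)*K*M := by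
      calc (Ka - K) * h θ ≤ ((2*δ/l)*K) * h θ := by
            apply mul_le_mul_of_nonneg_right hKadiff hhθ0
        _ ≤ ((2*δ/l)*K) * M := by
            apply mul_le_mul_of_nonneg_left hhθM (by positivity)
        _ = (2*δ/l)*K*M := by ring
    have hKah : Ka * h θ ≤ K * h θ + (2*δ/l)*K*M := by nlinarith [h6]
    have hεKa : ε₁ * Ka ≤ ε₁ * (2*K) := mul_le_mul_of_nonneg_left hKa2 hε₁0.le
    have hderiva : deriv f a ≤ K * h θ + (2*δ/l)*K*M + 2*ε₁*K := by nlinarith [hεKa]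
    have hstep : f l - f a ≤ δ*(K * h θ) + δ*((2*δ/l)*K*M) + δ*(2*ε₁*K) := by
      have := mul_le_mul_of_nonneg_left hderiva hδ.le
      nlinarith [X2]
    have q : δ*(2*δ/l)*M ≤ ε/2 := by
      rw [show δ*(2*δ/l)*M = 2*δ^2*M/l by ring, div_le_iff₀ hl0]
      nlinarith [h4Mδ]
    have hq1 : δ*((2*δ/l)*K*M) ≤ (ε/2)*K := by
      calc δ*((2*δ/l)*K*M) = (δ*(2*δ/l)*M)*K := by ring
        _ ≤ (ε/2)*K := mul_le_mul_of_nonneg_right q hK0.le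
    have h9 : δ*(2*ε₁) ≤ ε/2 := by
      rw [hε₁, show δ*(2*(ε/(4*(δ+1)))) = 2*δ*ε/(4*(δ+1)) by ring,
        div_le_div_iff₀ (by positivity) (by norm_num)]
      nlinarith
    have hq2 : δ*(2*ε₁*K) ≤ (ε/2)*K := by
      calc δ*(2*ε₁*K) = (δ*(2*ε₁))*K := by ring
        _ ≤ (ε/2)*K := mul_le_mul_of_nonneg_right h9 hK0.le
    linarith
  rw [abs_le]
  constructor <;> [linarith [e1]; linarith [e2]]
end

section
/- Let λ < 1/4 with roots β⁻ < β⁺ of β² + β + λ = 0, let γ ∈ (β⁻, β⁺), and let δ := min(β⁺ - γ, γ - β⁻)/2 > 0. Suppose g : [R,∞) → ℝ is measurable with ∫_r^∞ e^{-2(γ+δ)t} g(t)² dt < ∞ for all r ≥ R and sup_{t≥R} e^{-γt}|g(t)| ≤ M. Then the function w defined by w(s) = -e^{β⁻ s} ∫_R^s e^{(β⁺-β⁻)r} ∫_r^∞ e^{-β⁺ t} g(t) dt dr satisfies the bound e^{-2γs} w(s)² ≤ (e^{-2δs} / (4(γ-β⁻-δ)(β⁺-γ-δ))) ∫_R^s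 e^{4δr} ∫_r^∞ e^{-2(γ+δ)t} g(t)² dt dr for all s ≥ R, and consequently sup_{s≥R} e^{-γs}|w(s)| ≤ C·M with C depending only on γ-β⁻, β⁺-γ, δ. -/
open MeasureTheory Set Real Filter

lemma cs2 {α : Type*} [MeasurableSpace α] (μ : Measure α) (f g : α → ℝ)
    (hf : MemLp f 2 μ) (hg : MemLp g 2 μ) :
    (∫ a, f a * g a ∂μ)^2 ≤ (∫ a, (f a)^2 ∂μ) * (∫ a, (g a)^2 ∂μ) := by
  have h2 : ENNReal.ofReal (2:ℝ) = 2 := by norm_num [ENNReal.ofReal_ofNat]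
  have key := MeasureTheory.integral_mul_norm_le_Lp_mul_Lq (μ := μ) (f := f) (g := g)
    (p := 2) (q := 2) ⟨by norm_num, by norm_num, by norm_num⟩ (h2 ▸ hf) (h2 ▸ hg)
  have hA : (0:ℝ) ≤ ∫ a, (f a)^2 ∂μ := integral_nonneg fun a => sq_nonneg _
  have hB : (0:ℝ) ≤ ∫ a, (g a)^2 ∂μ := integral_nonneg fun a => sq_nonneg _
  have e1 : ∫ a, ‖f a‖ ^ (2:ℝ) ∂μ = ∫ a, (f a)^2 ∂μ := by
    refine integral_congr_ae (Eventually.of_forall fun a => ?_)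
    show ‖f a‖ ^ (2:ℝ) = (f a)^2
    rw [Real.rpow_two, Real.norm_eq_abs, sq_abs]
  have e2 : ∫ a, ‖g a‖ ^ (2:ℝ) ∂μ = ∫ a, (g a)^2 ∂μ := by
    refine integral_congr_ae (Eventually.of_forall fun a => ?_)
    show ‖g a‖ ^ (2:ℝ) = (g a)^2
    rw [Real.rpow_two, Real.norm_eq_abs, sq_abs]
  rw [e1, e2] at key
  have habs : |∫ a, f a * g a ∂μ| ≤ ∫ a, ‖f a‖ * ‖g a‖ ∂μ := by
    have := MeasureTheory.norm_integral_le_integral_norm (μ := μ) (fun a => f a * g a)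
    simpa [Real.norm_eq_abs, abs_mul] using this
  have hle : |∫ a, f a * g a ∂μ| ≤
      (∫ a, (f a)^2 ∂μ) ^ (1/2:ℝ) * (∫ a, (g a)^2 ∂μ) ^ (1/2:ℝ) := habs.trans key
  calc (∫ a, f a * g a ∂μ)^2 = |∫ a, f a * g a ∂μ|^2 := (sq_abs _).symm
    _ ≤ ((∫ a, (f a)^2 ∂μ) ^ (1/2:ℝ) * (∫ a, (g a)^2 ∂μ) ^ (1/2:ℝ))^2 :=
        pow_le_pow_left₀ (abs_nonneg _) hle 2
    _ = (∫ a, (f a)^2 ∂μ) * (∫ a, (g a)^2 ∂μ) := by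
        rw [mul_pow, ← Real.rpow_natCast (_ ^ (1/2:ℝ)) 2, ← Real.rpow_natCast (_ ^ (1/2:ℝ)) 2,
          ← Real.rpow_mul hA, ← Real.rpow_mul hB]
        norm_num

lemma expIntOn {c : ℝ} (hc : 0 < c) (r : ℝ) :
    IntegrableOn (fun t => Real.exp (-c*t)) (Set.Ici r) :=
  (integrableOn_Ici_iff_integrableOn_Ioi).mpr (exp_neg_integrableOn_Ioi r hc)

lemma expTend {c : ℝ} (hc : 0 < c) :
    Tendsto (fun t : ℝ => Real.exp (-c*t)) atTop (nhds 0) := by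
  apply Real.tendsto_exp_comp_nhds_zero.mpr
  have h : Tendsto (fun t:ℝ => c*t) atTop atTop :=
    Filter.Tendsto.const_mul_atTop hc Filter.tendsto_id
  have h2 := Filter.tendsto_neg_atTop_atBot.comp h
  refine h2.congr fun t => ?_
  simp [Function.comp, neg_mul]

lemma expIntVal {c : ℝ} (hc : 0 < c) (r : ℝ) :
    ∫ t in Set.Ici r, Real.exp (-c*t) = Real.exp (-c*r)/c := by
  rw [MeasureTheory.integral_Ici_eq_integral_Ioi]
  have hderiv : ∀ x ∈ Set.Ici r, HasDerivAt (fun t => -Real.exp (-c*t)/c)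
      (Real.exp (-c*x)) x := by
    intro x _
    have h1 : HasDerivAt (fun t : ℝ => -c*t) (-c) x := by
      simpa using (hasDerivAt_id x).const_mul (-c)
    have h2 := (Real.hasDerivAt_exp (-c*x)).comp x h1
    have h3 := (h2.neg).div_const c
    refine h3.congr_deriv ?_
    have hc0 : c ≠ 0 := hc.ne'
    field_simp
  have htend : Tendsto (fun t => -Real.exp (-c*t)/c) atTop (nhds 0) := by
    have := ((expTend hc).neg).div_const c
    simpa using this
  rw [MeasureTheory.integral_Ioi_of_hasDerivAt_of_tendsto' hderiv
    ((expIntOn hc r).mono Set.Ioi_subset_Ici_self le_rfl) htend]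
  field_simp
  ring

lemma exp_sq (x : ℝ) : (Real.exp x)^2 = Real.exp (2*x) := by
  rw [sq, ← Real.exp_add]; congr 1; ring

lemma stepA (βp γ δ b : ℝ) (hb : 0 < b) (hbdef : b = βp - γ - δ) (g : ℝ → ℝ)
    (hgmeas : Measurable g) (r : ℝ)
    (hg2r : IntegrableOn (fun t => Real.exp (-2*(γ+δ)*t) * (g t)^2) (Set.Ici r)) :
    (∫ t in Set.Ici r, Real.exp (-βp*t) * g t)^2 ≤
      (Real.exp (-2*b*r)/(2*b)) * ∫ t in Set.Ici r, Real.exp (-2*(γ+δ)*t) * (g t)^2 := by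
  have h2b : (0:ℝ) < 2*b := by linarith
  have hm1 : Measurable (fun t : ℝ => Real.exp (-b*t)) := (measurable_id.const_mul (-b)).exp
  have hm2 : Measurable (fun t : ℝ => Real.exp (-(γ+δ)*t) * g t) :=
    ((measurable_id.const_mul (-(γ+δ))).exp).mul hgmeas
  have hf1 : MemLp (fun t => Real.exp (-b*t)) 2 (volume.restrict (Set.Ici r)) := by
    rw [memLp_two_iff_integrable_sq hm1.aestronglyMeasurable]
    refine (expIntOn h2b r).congr (ae_of_all _ fun t => ?_)
    show Real.exp (-(2*b)*t) = (Real.exp (-b*t))^2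
    rw [exp_sq]; congr 1; ring
  have hf2 : MemLp (fun t => Real.exp (-(γ+δ)*t) * g t) 2 (volume.restrict (Set.Ici r)) := by
    rw [memLp_two_iff_integrable_sq hm2.aestronglyMeasurable]
    refine hg2r.congr (ae_of_all _ fun t => ?_)
    show Real.exp (-2*(γ+δ)*t) * (g t)^2 = (Real.exp (-(γ+δ)*t) * g t)^2
    rw [mul_pow, exp_sq, show (2*(-(γ+δ)*t)) = -2*(γ+δ)*t by ring]
  have hcs := cs2 _ _ _ hf1 hf2
  have e0 : (∫ t in Set.Ici r, Real.exp (-b*t) * (Real.exp (-(γ+δ)*t) * g t))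
      = ∫ t in Set.Ici r, Real.exp (-βp*t) * g t := by
    refine integral_congr_ae (ae_of_all _ fun t => ?_)
    show Real.exp (-b*t) * (Real.exp (-(γ+δ)*t) * g t) = Real.exp (-βp*t) * g t
    rw [← mul_assoc, ← Real.exp_add, show (-b*t + -(γ+δ)*t) = -βp*t by rw [hbdef]; ring]
  have e1 : (∫ t in Set.Ici r, (Real.exp (-b*t))^2) = Real.exp (-2*b*r)/(2*b) := by
    have : (∫ t in Set.Ici r, (Real.exp (-b*t))^2) = ∫ t in Set.Ici r, Real.exp (-(2*b)*t) := by
      refine integral_congr_ae (ae_of_all _ fun t => ?_)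
      show (Real.exp (-b*t))^2 = Real.exp (-(2*b)*t)
      rw [exp_sq]; congr 1; ring
    rw [this, expIntVal h2b r]
    congr 2; ring
  have e2 : (∫ t in Set.Ici r, (Real.exp (-(γ+δ)*t) * g t)^2)
      = ∫ t in Set.Ici r, Real.exp (-2*(γ+δ)*t) * (g t)^2 := by
    refine integral_congr_ae (ae_of_all _ fun t => ?_)
    show (Real.exp (-(γ+δ)*t) * g t)^2 = Real.exp (-2*(γ+δ)*t) * (g t)^2
    rw [mul_pow, exp_sq, show (2*(-(γ+δ)*t)) = -2*(γ+δ)*t by ring]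
  rw [e0, e1, e2] at hcs
  exact hcs

lemma tailCont (h : ℝ → ℝ) (R s : ℝ) (hint : IntegrableOn h (Set.Ici R)) :
    ContinuousOn (fun r => ∫ t in Set.Ici r, h t) (Set.Icc R s) := by
  have heq : Set.EqOn (fun r => ∫ t in Set.Ici r, h t)
      (fun r => (∫ t in Set.Ici R, h t) - ∫ t in Set.Ioc R r, h t) (Set.Icc R s) := by
    intro r hr
    show (∫ t in Set.Ici r, h t) = (∫ t in Set.Ici R, h t) - ∫ t in Set.Ioc R r, h t
    have hsplit : (∫ t in Set.Ioi R, h t) = (∫ t in Set.Ioc R r, h t) + ∫ t in Set.Ioi r, h t := by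
      rw [← MeasureTheory.setIntegral_union (Set.Ioc_disjoint_Ioi le_rfl) measurableSet_Ioi
        (hint.mono_set (fun x hx => le_of_lt hx.1)) (hint.mono_set (fun x hx => le_trans hr.1 (le_of_lt hx)))]
      rw [Set.Ioc_union_Ioi_eq_Ioi hr.1]
    rw [MeasureTheory.integral_Ici_eq_integral_Ioi, MeasureTheory.integral_Ici_eq_integral_Ioi,
      hsplit]
    ring
  refine ContinuousOn.congr (continuousOn_const.sub ?_) heq
  exact intervalIntegral.continuousOn_primitive (hint.mono_set Set.Icc_subset_Ici_self)

lemma expIocLe {c : ℝ} (hc : 0 < c) {R s : ℝ} (hRs : R ≤ s) :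
    (∫ r in Set.Ioc R s, Real.exp (c*r)) ≤ Real.exp (c*s)/c := by
  rw [← intervalIntegral.integral_of_le hRs]
  have hderiv : ∀ x ∈ Set.uIcc R s, HasDerivAt (fun t => Real.exp (c*t)/c) (Real.exp (c*x)) x := by
    intro x _
    have h1 : HasDerivAt (fun t : ℝ => c*t) c x := by
      simpa using (hasDerivAt_id x).const_mul c
    have h2 := ((Real.hasDerivAt_exp (c*x)).comp x h1).div_const c
    refine h2.congr_deriv ?_
    have hc0 : c ≠ 0 := hc.ne'
    field_simp
  have hii : IntervalIntegrable (fun t => Real.exp (c*t)) volume R s :=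
    (Real.continuous_exp.comp (continuous_const.mul continuous_id)).intervalIntegrable R s
  rw [intervalIntegral.integral_eq_sub_of_hasDerivAt hderiv hii]
  have := Real.exp_pos (c*R)
  have h2 : 0 < Real.exp (c*R)/c := by positivity
  linarith


lemma stepB (a b δ R s c : ℝ) (ha : 0 < a) (hb : 0 < b) (hRs : R ≤ s)
    (hc : c = a + b + 2*δ) (I J : ℝ → ℝ)
    (hIcont : ContinuousOn I (Set.Icc R s)) (hJcont : ContinuousOn J (Set.Icc R s))
    (hstep : ∀ r ∈ Set.Ioc R s, (I r)^2 ≤ (Real.exp (-2*b*r)/(2*b)) * J r) :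
    (∫ r in Set.Ioc R s, Real.exp (c*r) * I r)^2 ≤
      (Real.exp (2*a*s)/(2*a)) * ((1/(2*b)) * ∫ r in Set.Ioc R s, Real.exp (4*δ*r) * J r) := by
  have hvcont : ContinuousOn (fun r => Real.exp ((b+2*δ)*r) * I r) (Set.Icc R s) :=
    (Real.continuous_exp.comp (continuous_const.mul continuous_id)).continuousOn.mul hIcont
  have hum : Measurable (fun r : ℝ => Real.exp (a*r)) := (measurable_id.const_mul a).exp
  have hu2 : MemLp (fun r => Real.exp (a*r)) 2 (volume.restrict (Set.Ioc R s)) := by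
    rw [memLp_two_iff_integrable_sq hum.aestronglyMeasurable]
    exact ((Real.continuous_exp.comp (continuous_const.mul continuous_id)).pow 2).integrableOn_Ioc
  have hvmeas : AEStronglyMeasurable (fun r => Real.exp ((b+2*δ)*r) * I r)
      (volume.restrict (Set.Ioc R s)) :=
    (hvcont.mono Set.Ioc_subset_Icc_self).aestronglyMeasurable measurableSet_Ioc
  have hv2 : Integrable (fun r => (Real.exp ((b+2*δ)*r) * I r)^2)
      (volume.restrict (Set.Ioc R s)) :=
    ((hvcont.pow 2).integrableOn_Icc).mono_set Set.Ioc_subset_Icc_self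
  have hcs := cs2 (volume.restrict (Set.Ioc R s)) (fun r => Real.exp (a*r))
    (fun r => Real.exp ((b+2*δ)*r) * I r) hu2 ((memLp_two_iff_integrable_sq hvmeas).mpr hv2)
  have e0 : (∫ r in Set.Ioc R s, Real.exp (a*r) * (Real.exp ((b+2*δ)*r) * I r))
      = ∫ r in Set.Ioc R s, Real.exp (c*r) * I r := by
    refine integral_congr_ae (ae_of_all _ fun r => ?_)
    show Real.exp (a*r) * (Real.exp ((b+2*δ)*r) * I r) = Real.exp (c*r) * I r
    rw [← mul_assoc, ← Real.exp_add, show a*r + (b+2*δ)*r = c*r by rw [hc]; ring]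
  have e1 : (∫ r in Set.Ioc R s, (Real.exp (a*r))^2) ≤ Real.exp (2*a*s)/(2*a) := by
    have heq : (∫ r in Set.Ioc R s, (Real.exp (a*r))^2)
        = ∫ r in Set.Ioc R s, Real.exp ((2*a)*r) := by
      refine integral_congr_ae (ae_of_all _ fun r => ?_)
      show (Real.exp (a*r))^2 = Real.exp ((2*a)*r)
      rw [exp_sq]; congr 1; ring
    rw [heq]
    calc (∫ r in Set.Ioc R s, Real.exp ((2*a)*r)) ≤ Real.exp ((2*a)*s)/(2*a) :=
          expIocLe (by linarith) hRs
      _ = Real.exp (2*a*s)/(2*a) := by rw [show (2*a)*s = 2*a*s by ring]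
  have hQint : IntegrableOn (fun r => (1/(2*b)) * (Real.exp (4*δ*r) * J r)) (Set.Ioc R s) := by
    refine IntegrableOn.mono_set ?_ Set.Ioc_subset_Icc_self
    exact (continuousOn_const.mul
      ((Real.continuous_exp.comp (continuous_const.mul continuous_id)).continuousOn.mul
        hJcont)).integrableOn_Icc
  have e2 : (∫ r in Set.Ioc R s, (Real.exp ((b+2*δ)*r) * I r)^2)
      ≤ (1/(2*b)) * ∫ r in Set.Ioc R s, Real.exp (4*δ*r) * J r := by
    calc (∫ r in Set.Ioc R s, (Real.exp ((b+2*δ)*r) * I r)^2)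
        ≤ ∫ r in Set.Ioc R s, (1/(2*b)) * (Real.exp (4*δ*r) * J r) := by
          refine setIntegral_mono_on hv2 hQint measurableSet_Ioc fun r hr => ?_
          calc (Real.exp ((b+2*δ)*r) * I r)^2
              = Real.exp (2*(b+2*δ)*r) * (I r)^2 := by
                rw [mul_pow, exp_sq, show 2*((b+2*δ)*r) = 2*(b+2*δ)*r by ring]
            _ ≤ Real.exp (2*(b+2*δ)*r) * ((Real.exp (-2*b*r)/(2*b)) * J r) :=
                mul_le_mul_of_nonneg_left (hstep r hr) (Real.exp_pos _).le
            _ = (1/(2*b)) * ((Real.exp (2*(b+2*δ)*r) * Real.exp (-2*b*r)) * J r) := by ring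
            _ = (1/(2*b)) * (Real.exp (4*δ*r) * J r) := by
                rw [← Real.exp_add, show 2*(b+2*δ)*r + -2*b*r = 4*δ*r by ring]
      _ = (1/(2*b)) * ∫ r in Set.Ioc R s, Real.exp (4*δ*r) * J r := by
          rw [MeasureTheory.integral_const_mul]
  have hv20 : 0 ≤ ∫ r in Set.Ioc R s, (Real.exp ((b+2*δ)*r) * I r)^2 :=
    integral_nonneg fun r => sq_nonneg _
  calc (∫ r in Set.Ioc R s, Real.exp (c*r) * I r)^2
      = (∫ r in Set.Ioc R s, Real.exp (a*r) * (Real.exp ((b+2*δ)*r) * I r))^2 := by rw [e0]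
    _ ≤ (∫ r in Set.Ioc R s, (Real.exp (a*r))^2) *
        (∫ r in Set.Ioc R s, (Real.exp ((b+2*δ)*r) * I r)^2) := hcs
    _ ≤ (Real.exp (2*a*s)/(2*a)) *
        ((1/(2*b)) * ∫ r in Set.Ioc R s, Real.exp (4*δ*r) * J r) := by
        refine mul_le_mul e1 e2 hv20 (div_nonneg (Real.exp_pos _).le (by linarith))

open MeasureTheory in
theorem stmt16 (lam βm βp γ δ : ℝ) (hlam : lam < 1/4)
    (hm : βm^2 + βm + lam = 0) (hp : βp^2 + βp + lam = 0) (hmp : βm < βp)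
    (hγ1 : βm < γ) (hγ2 : γ < βp)
    (hδ : δ = min (βp - γ) (γ - βm) / 2) :
    ∃ C > 0, ∀ (R M : ℝ) (g : ℝ → ℝ), Measurable g →
      (∀ r ≥ R, IntegrableOn (fun t => Real.exp (-2*(γ+δ)*t) * (g t)^2) (Set.Ici r)) →
      (∀ t ≥ R, Real.exp (-γ*t) * |g t| ≤ M) →
      ∀ w : ℝ → ℝ,
        (∀ s, w s = -Real.exp (βm*s) *
          ∫ r in R..s, Real.exp ((βp-βm)*r) * ∫ t in Set.Ici r, Real.exp (-βp*t) * g t) →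
        (∀ s ≥ R, Real.exp (-2*γ*s) * (w s)^2 ≤
          (Real.exp (-2*δ*s) / (4*(γ - βm - δ)*(βp - γ - δ))) *
            ∫ r in R..s, Real.exp (4*δ*r) *
              ∫ t in Set.Ici r, Real.exp (-2*(γ+δ)*t) * (g t)^2) ∧
        ∀ s ≥ R, Real.exp (-γ*s) * |w s| ≤ C * M := by
  have hδ1 : δ ≤ (βp - γ)/2 := by
    rw [hδ]; have := min_le_left (βp - γ) (γ - βm); linarith
  have hδ2 : δ ≤ (γ - βm)/2 := by
    rw [hδ]; have := min_le_right (βp - γ) (γ - βm); linarith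
  have hδpos : 0 < δ := by
    rw [hδ]
    have h1 : 0 < min (βp - γ) (γ - βm) := lt_min (by linarith) (by linarith)
    linarith
  set a := γ - βm - δ with ha_def
  set b := βp - γ - δ with hb_def
  have ha : 0 < a := by rw [ha_def]; linarith
  have hb : 0 < b := by rw [hb_def]; linarith
  have hab : (0:ℝ) < a * b := mul_pos ha hb
  have hsq : 0 < Real.sqrt (a*b) := Real.sqrt_pos.mpr hab
  refine ⟨1/(4*δ*Real.sqrt (a*b)), div_pos one_pos (by positivity), ?_⟩
  intro R M g hgmeas hg2 hM w hw
  have hM0 : 0 ≤ M := le_trans (mul_nonneg (Real.exp_pos _).le (abs_nonneg _)) (hM R le_rfl)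
  have hgabs : ∀ t, R ≤ t → |g t| ≤ M * Real.exp (γ*t) := by
    intro t ht
    calc |g t| = Real.exp (γ*t) * (Real.exp (-γ*t) * |g t|) := by
          rw [← mul_assoc, ← Real.exp_add, show γ*t + -γ*t = 0 by ring, Real.exp_zero, one_mul]
      _ ≤ Real.exp (γ*t) * M := mul_le_mul_of_nonneg_left (hM t ht) (Real.exp_pos _).le
      _ = M * Real.exp (γ*t) := mul_comm _ _
  have hm_h : Measurable (fun t => Real.exp (-βp*t) * g t) :=
    ((measurable_id.const_mul (-βp)).exp).mul hgmeas
  have hint_h : IntegrableOn (fun t => Real.exp (-βp*t) * g t) (Set.Ici R) := by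
    have hd : IntegrableOn (fun t => M * Real.exp (-(βp-γ)*t)) (Set.Ici R) :=
      (expIntOn (by linarith : (0:ℝ) < βp - γ) R).const_mul M
    refine Integrable.mono hd hm_h.aestronglyMeasurable ?_
    rw [ae_restrict_iff' measurableSet_Ici]
    refine ae_of_all _ fun t ht => ?_
    have h1 : |Real.exp (-βp*t) * g t| ≤ M * Real.exp (-(βp-γ)*t) := by
      rw [abs_mul, abs_of_pos (Real.exp_pos _)]
      calc Real.exp (-βp*t) * |g t| ≤ Real.exp (-βp*t) * (M * Real.exp (γ*t)) :=
            mul_le_mul_of_nonneg_left (hgabs t ht) (Real.exp_pos _).le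
        _ = M * (Real.exp (-βp*t) * Real.exp (γ*t)) := by ring
        _ = M * Real.exp (-(βp-γ)*t) := by
            rw [← Real.exp_add, show -βp*t + γ*t = -(βp-γ)*t by ring]
    rw [Real.norm_eq_abs, Real.norm_eq_abs]
    exact h1.trans (le_abs_self _)
  have hJ0 : ∀ r : ℝ, 0 ≤ ∫ t in Set.Ici r, Real.exp (-2*(γ+δ)*t) * (g t)^2 := fun r =>
    setIntegral_nonneg measurableSet_Ici fun t _ => mul_nonneg (Real.exp_pos _).le (sq_nonneg _)
  -- conclusion 1
  have key : ∀ s, R ≤ s → Real.exp (-2*γ*s) * (w s)^2 ≤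
      (Real.exp (-2*δ*s) / (4*a*b)) *
        ∫ r in R..s, Real.exp (4*δ*r) *
          ∫ t in Set.Ici r, Real.exp (-2*(γ+δ)*t) * (g t)^2 := by
    intro s hs
    have hIcont : ContinuousOn (fun r => ∫ t in Set.Ici r, Real.exp (-βp*t) * g t)
        (Set.Icc R s) := tailCont _ R s hint_h
    have hJcont : ContinuousOn (fun r => ∫ t in Set.Ici r, Real.exp (-2*(γ+δ)*t) * (g t)^2)
        (Set.Icc R s) := tailCont _ R s (hg2 R le_rfl)
    have hB : (∫ r in Set.Ioc R s, Real.exp ((βp-βm)*r) *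
          ∫ t in Set.Ici r, Real.exp (-βp*t) * g t)^2 ≤
        (Real.exp (2*a*s)/(2*a)) * ((1/(2*b)) * ∫ r in Set.Ioc R s, Real.exp (4*δ*r) *
          ∫ t in Set.Ici r, Real.exp (-2*(γ+δ)*t) * (g t)^2) := by
      refine stepB a b δ R s (βp-βm) ha hb hs (by rw [ha_def, hb_def]; ring) _ _
        hIcont hJcont fun r hr => ?_
      exact stepA βp γ δ b hb hb_def g hgmeas r (hg2 r hr.1.le)
    have hQ0 : 0 ≤ ∫ r in Set.Ioc R s, Real.exp (4*δ*r) *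
        ∫ t in Set.Ici r, Real.exp (-2*(γ+δ)*t) * (g t)^2 :=
      setIntegral_nonneg measurableSet_Ioc fun r _ =>
        mul_nonneg (Real.exp_pos _).le (hJ0 r)
    rw [hw s]
    simp only [intervalIntegral.integral_of_le hs]
    set K := ∫ r in Set.Ioc R s, Real.exp ((βp-βm)*r) *
      ∫ t in Set.Ici r, Real.exp (-βp*t) * g t with hK_def
    set Q := ∫ r in Set.Ioc R s, Real.exp (4*δ*r) *
      ∫ t in Set.Ici r, Real.exp (-2*(γ+δ)*t) * (g t)^2 with hQ_def
    have hws : (-Real.exp (βm*s) * K)^2 = Real.exp (2*βm*s) * K^2 := by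
      have h1 : (-Real.exp (βm*s) * K)^2 = (Real.exp (βm*s))^2 * K^2 := by ring
      rw [h1, exp_sq, show 2*(βm*s) = 2*βm*s by ring]
    rw [hws]
    have harg : Real.exp (-2*γ*s) * Real.exp (2*βm*s) = Real.exp (2*(βm-γ)*s) := by
      rw [← Real.exp_add]; congr 1; ring
    calc Real.exp (-2*γ*s) * (Real.exp (2*βm*s) * K^2)
        = Real.exp (2*(βm-γ)*s) * K^2 := by rw [← mul_assoc, harg]
      _ ≤ Real.exp (2*(βm-γ)*s) * ((Real.exp (2*a*s)/(2*a)) * ((1/(2*b)) * Q)) :=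
          mul_le_mul_of_nonneg_left hB (Real.exp_pos _).le
      _ = (Real.exp (2*(βm-γ)*s) * Real.exp (2*a*s)) * (Q/(4*a*b)) := by
          field_simp; ring
      _ = Real.exp (-2*δ*s) * (Q/(4*a*b)) := by
          rw [← Real.exp_add, show 2*(βm-γ)*s + 2*a*s = -2*δ*s by rw [ha_def]; ring]
      _ = (Real.exp (-2*δ*s)/(4*a*b)) * Q := by ring
  refine ⟨key, ?_⟩
  -- conclusion 2
  intro s hs
  have h2δ : (0:ℝ) < 2*δ := by linarith
  have hJle : ∀ r, R ≤ r →
      (∫ t in Set.Ici r, Real.exp (-2*(γ+δ)*t) * (g t)^2)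
        ≤ M^2 * (Real.exp (-(2*δ)*r)/(2*δ)) := by
    intro r hr
    calc (∫ t in Set.Ici r, Real.exp (-2*(γ+δ)*t) * (g t)^2)
        ≤ ∫ t in Set.Ici r, M^2 * Real.exp (-(2*δ)*t) := by
          refine setIntegral_mono_on (hg2 r hr) ((expIntOn h2δ r).const_mul (M^2))
            measurableSet_Ici fun t ht => ?_
          have h3 : (g t)^2 ≤ M^2 * Real.exp (2*γ*t) := by
            have h4 := pow_le_pow_left₀ (abs_nonneg (g t)) (hgabs t (hr.trans ht)) 2
            rw [sq_abs] at h4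
            calc (g t)^2 ≤ (M * Real.exp (γ*t))^2 := h4
              _ = M^2 * Real.exp (2*γ*t) := by
                  rw [mul_pow, exp_sq, show 2*(γ*t) = 2*γ*t by ring]
          calc Real.exp (-2*(γ+δ)*t) * (g t)^2
              ≤ Real.exp (-2*(γ+δ)*t) * (M^2 * Real.exp (2*γ*t)) :=
                mul_le_mul_of_nonneg_left h3 (Real.exp_pos _).le
            _ = M^2 * (Real.exp (-2*(γ+δ)*t) * Real.exp (2*γ*t)) := by ring
            _ = M^2 * Real.exp (-(2*δ)*t) := by
                rw [← Real.exp_add, show -2*(γ+δ)*t + 2*γ*t = -(2*δ)*t by ring]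
      _ = M^2 * (Real.exp (-(2*δ)*r)/(2*δ)) := by
          rw [MeasureTheory.integral_const_mul, expIntVal h2δ r]
  have hJcont : ContinuousOn (fun r => ∫ t in Set.Ici r, Real.exp (-2*(γ+δ)*t) * (g t)^2)
      (Set.Icc R s) := tailCont _ R s (hg2 R le_rfl)
  have hQle : (∫ r in R..s, Real.exp (4*δ*r) *
      ∫ t in Set.Ici r, Real.exp (-2*(γ+δ)*t) * (g t)^2)
        ≤ (M^2/(2*δ)) * (Real.exp ((2*δ)*s)/(2*δ)) := by
    rw [intervalIntegral.integral_of_le hs]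
    have hint1 : IntegrableOn (fun r => Real.exp (4*δ*r) *
        ∫ t in Set.Ici r, Real.exp (-2*(γ+δ)*t) * (g t)^2) (Set.Ioc R s) := by
      refine IntegrableOn.mono_set ?_ Set.Ioc_subset_Icc_self
      exact ((Real.continuous_exp.comp (continuous_const.mul continuous_id)).continuousOn.mul
        hJcont).integrableOn_Icc
    have hint2 : IntegrableOn (fun r => (M^2/(2*δ)) * Real.exp ((2*δ)*r)) (Set.Ioc R s) :=
      (continuous_const.mul
        (Real.continuous_exp.comp (continuous_const.mul continuous_id))).integrableOn_Ioc
    calc (∫ r in Set.Ioc R s, Real.exp (4*δ*r) *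
          ∫ t in Set.Ici r, Real.exp (-2*(γ+δ)*t) * (g t)^2)
        ≤ ∫ r in Set.Ioc R s, (M^2/(2*δ)) * Real.exp ((2*δ)*r) := by
          refine setIntegral_mono_on hint1 hint2 measurableSet_Ioc fun r hr => ?_
          calc Real.exp (4*δ*r) * (∫ t in Set.Ici r, Real.exp (-2*(γ+δ)*t) * (g t)^2)
              ≤ Real.exp (4*δ*r) * (M^2 * (Real.exp (-(2*δ)*r)/(2*δ))) :=
                mul_le_mul_of_nonneg_left (hJle r hr.1.le) (Real.exp_pos _).le
            _ = (M^2/(2*δ)) * (Real.exp (4*δ*r) * Real.exp (-(2*δ)*r)) := by ring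
            _ = (M^2/(2*δ)) * Real.exp ((2*δ)*r) := by
                rw [← Real.exp_add, show 4*δ*r + -(2*δ)*r = (2*δ)*r by ring]
      _ = (M^2/(2*δ)) * ∫ r in Set.Ioc R s, Real.exp ((2*δ)*r) := by
          rw [MeasureTheory.integral_const_mul]
      _ ≤ (M^2/(2*δ)) * (Real.exp ((2*δ)*s)/(2*δ)) := by
          refine mul_le_mul_of_nonneg_left (expIocLe h2δ hs) ?_
          positivity
  have h2 : Real.exp (-2*γ*s) * (w s)^2 ≤ M^2/(16*δ^2*(a*b)) := by
    have hc0 : 0 ≤ Real.exp (-2*δ*s)/(4*a*b) := div_nonneg (Real.exp_pos _).le (by linarith)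
    have hprod : Real.exp (-2*δ*s) * Real.exp ((2*δ)*s) = 1 := by
      rw [← Real.exp_add, show -2*δ*s + (2*δ)*s = 0 by ring, Real.exp_zero]
    calc Real.exp (-2*γ*s) * (w s)^2
        ≤ (Real.exp (-2*δ*s)/(4*a*b)) * ∫ r in R..s, Real.exp (4*δ*r) *
            ∫ t in Set.Ici r, Real.exp (-2*(γ+δ)*t) * (g t)^2 := key s hs
      _ ≤ (Real.exp (-2*δ*s)/(4*a*b)) * ((M^2/(2*δ)) * (Real.exp ((2*δ)*s)/(2*δ))) :=
          mul_le_mul_of_nonneg_left hQle hc0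
      _ = (Real.exp (-2*δ*s) * Real.exp ((2*δ)*s)) * (M^2/(16*δ^2*(a*b))) := by
          field_simp; ring
      _ = M^2/(16*δ^2*(a*b)) := by rw [hprod, one_mul]
  have hx0 : 0 ≤ Real.exp (-γ*s) * |w s| := mul_nonneg (Real.exp_pos _).le (abs_nonneg _)
  have hx2 : (Real.exp (-γ*s) * |w s|)^2 = Real.exp (-2*γ*s) * (w s)^2 := by
    rw [mul_pow, sq_abs, exp_sq, show 2*(-γ*s) = -2*γ*s by ring]
  have hCM : (1/(4*δ*Real.sqrt (a*b)) * M)^2 = M^2/(16*δ^2*(a*b)) := by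
    have h5 : (4*δ*Real.sqrt (a*b))^2 = 16*δ^2*(a*b) := by
      rw [mul_pow, mul_pow, Real.sq_sqrt hab.le]; ring
    rw [mul_pow, div_pow, one_pow, h5]; ring
  have hfin : (Real.exp (-γ*s) * |w s|)^2 ≤ (1/(4*δ*Real.sqrt (a*b)) * M)^2 := by
    rw [hx2, hCM]; exact h2
  have hCM0 : 0 ≤ 1/(4*δ*Real.sqrt (a*b)) * M :=
    mul_nonneg (le_of_lt (div_pos one_pos (by positivity))) hM0
  calc Real.exp (-γ*s) * |w s| = Real.sqrt ((Real.exp (-γ*s) * |w s|)^2) :=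
        (Real.sqrt_sq hx0).symm
    _ ≤ Real.sqrt ((1/(4*δ*Real.sqrt (a*b)) * M)^2) := Real.sqrt_le_sqrt hfin
    _ = 1/(4*δ*Real.sqrt (a*b)) * M := Real.sqrt_sq hCM0
end
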